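/- Let ε ≥ 0, C_0, D_0 ∈ ℝ, set θ = (π + ε)/2 and define the sequence y(n) = C_0·cos(nθ) + D_0·sin(nθ) for n ∈ ℕ. Then for every n, |y(n+2) + ε·y(n+1) + y(n)| ≤ (|C_0| + |D_0|)·ε³/24. In particular, y is a globally valid asymptotic solution, uniformly in n, of the difference equation y(n+2) + ε y(n+1) + y(n) = 0. -/

import Mathlib

lemma sin_lb (t : ℝ) (ht : 0 ≤ t) : t - t ^ 3 / 6 ≤ Real.sin t := by
  have h : ∀ x : ℝ, HasDerivAt (fun t => Real.sin t - t + t ^ 3 / 6)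
      (Real.cos x - 1 + x ^ 2 / 2) x := by
    intro x
    have := ((Real.hasDerivAt_sin x).sub (hasDerivAt_id x)).add
      ((hasDerivAt_pow 3 x).div_const 6)
    refine this.congr_deriv ?_
    push_cast
    ring
  have mono : Monotone (fun t => Real.sin t - t + t ^ 3 / 6) := by
    apply monotone_of_deriv_nonneg
    · exact fun x => (h x).differentiableAt
    · intro x
      rw [(h x).deriv]
      have := Real.one_sub_sq_div_two_le_cos (x := x)
      linarith
  have := mono ht
  simp only [Real.sin_zero] at this
  linarith

/-- The renormalization-method solution `y(n) = C₀ cos(nθ) + D₀ sin(nθ)` with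
`θ = (π+ε)/2` solves the perturbed difference equation
`y(n+2) + ε y(n+1) + y(n) = 0` uniformly up to `(|C₀|+|D₀|)·ε³/24`. -/
theorem perturbed_difference_equation_renorm_solution (ε C₀ D₀ : ℝ) (hε : 0 ≤ ε) :
    ∀ n : ℕ,
      |(C₀ * Real.cos ((n + 2 : ℕ) * ((Real.pi + ε) / 2))
            + D₀ * Real.sin ((n + 2 : ℕ) * ((Real.pi + ε) / 2)))
          + ε * (C₀ * Real.cos ((n + 1 : ℕ) * ((Real.pi + ε) / 2))
            + D₀ * Real.sin ((n + 1 : ℕ) * ((Real.pi + ε) / 2)))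
          + (C₀ * Real.cos ((n : ℕ) * ((Real.pi + ε) / 2))
            + D₀ * Real.sin ((n : ℕ) * ((Real.pi + ε) / 2)))|
        ≤ (|C₀| + |D₀|) * ε ^ 3 / 24 := by
  intro n
  set t : ℝ := ε / 2 with htdef
  set x : ℝ := (n : ℝ) * ((Real.pi + ε) / 2) with hxdef
  have h2 : ((n + 2 : ℕ) : ℝ) * ((Real.pi + ε) / 2) = (x + 2 * t) + Real.pi := by
    push_cast [hxdef, htdef]; ring
  have h1 : ((n + 1 : ℕ) : ℝ) * ((Real.pi + ε) / 2) = (x + t) + Real.pi / 2 := by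
    push_cast [hxdef, htdef]; ring
  rw [h2, h1, Real.cos_add_pi, Real.sin_add_pi, Real.cos_add_pi_div_two,
    Real.sin_add_pi_div_two]
  have pyth := Real.sin_sq_add_cos_sq t
  have key : (C₀ * -Real.cos (x + 2 * t) + D₀ * -Real.sin (x + 2 * t))
      + ε * (C₀ * -Real.sin (x + t) + D₀ * Real.cos (x + t))
      + (C₀ * Real.cos x + D₀ * Real.sin x)
      = (2 * Real.sin t - ε) * (C₀ * Real.sin (x + t) - D₀ * Real.cos (x + t)) := by
    have h2t : (2 : ℝ) * t = t + t := by ring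
    rw [h2t, Real.cos_add x (t + t), Real.sin_add x (t + t), Real.cos_add t t,
      Real.sin_add t t, Real.cos_add x t, Real.sin_add x t]
    linear_combination (-(C₀ * Real.cos x + D₀ * Real.sin x)) * pyth
  rw [key, abs_mul]
  have hsl : Real.sin t ≤ t := Real.sin_le (by positivity)
  have hlb : t - t ^ 3 / 6 ≤ Real.sin t := sin_lb t (by positivity)
  have heq : ε ^ 3 / 24 = t ^ 3 / 3 := by rw [htdef]; ring
  have hε2 : ε = 2 * t := by rw [htdef]; ring
  have h1 : |2 * Real.sin t - ε| ≤ ε ^ 3 / 24 := by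
    rw [abs_le, heq, hε2]
    constructor <;> linarith
  have h2 : |C₀ * Real.sin (x + t) - D₀ * Real.cos (x + t)| ≤ |C₀| + |D₀| := by
    calc |C₀ * Real.sin (x + t) - D₀ * Real.cos (x + t)|
        ≤ |C₀ * Real.sin (x + t)| + |D₀ * Real.cos (x + t)| := abs_sub _ _
      _ ≤ |C₀| * 1 + |D₀| * 1 := by
          rw [abs_mul, abs_mul]
          gcongr <;> first | exact Real.abs_sin_le_one _ | exact Real.abs_cos_le_one _
      _ = |C₀| + |D₀| := by ring
  calc |2 * Real.sin t - ε| * |C₀ * Real.sin (x + t) - D₀ * Real.cos (x + t)|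
      ≤ (ε ^ 3 / 24) * (|C₀| + |D₀|) := by
        apply mul_le_mul h1 h2 (abs_nonneg _) (by positivity)
    _ = (|C₀| + |D₀|) * ε ^ 3 / 24 := by ring
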